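/- Let {b_k} be a nonincreasing sequence with b_k ∈ [0,1] and b_0 < 1, and let n ≥ 2. Then the following are equivalent: (a) ∑_{k=0}^∞ ∏_{s=k(n-1)}^{(k+1)(n-1)-1} b_s(1-b_s) = ∞; (b) ∑_{s=0}^∞ (b_s(1-b_s))^{n-1} = ∞; (c) ∑_{s=0}^∞ b_s^{n-1} = ∞. -/

import Mathlib

section Aux

variable {b : ℕ → ℝ} {m : ℕ}

/-- (b) ↔ (c) -/
lemma aux_bc (hm : 1 ≤ m) (hb : ∀ k, b k ∈ Set.Icc (0 : ℝ) 1) (hb0 : b 0 < 1)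
    (hmono : Antitone b) :
    Summable (fun s => (b s * (1 - b s)) ^ m) ↔ Summable (fun s => b s ^ m) := by
  have hc : (0:ℝ) < 1 - b 0 := by linarith
  have hnn : ∀ s, (0:ℝ) ≤ b s := fun s => (hb s).1
  have hle1 : ∀ s, b s ≤ 1 := fun s => (hb s).2
  constructor
  · intro h
    have h2 : Summable (fun s => (b s * (1 - b 0)) ^ m) := by
      refine h.of_nonneg_of_le
        (fun s => pow_nonneg (mul_nonneg (hnn s) hc.le) m) (fun s => ?_)
      refine pow_le_pow_left₀ (mul_nonneg (hnn s) hc.le) ?_ m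
      have : 1 - b 0 ≤ 1 - b s := by have := hmono (Nat.zero_le s); linarith
      exact mul_le_mul_of_nonneg_left this (hnn s)
    have h3 : Summable (fun s => b s ^ m * (1 - b 0) ^ m) := by
      refine h2.congr fun s => ?_
      rw [mul_pow]
    have h4 := h3.mul_right ((1 - b 0) ^ m)⁻¹
    refine h4.congr fun s => ?_
    field_simp
  · intro h
    have hfac : ∀ s, (0:ℝ) ≤ b s * (1 - b s) := fun s =>
      mul_nonneg (hnn s) (by have := hle1 s; linarith)
    refine h.of_nonneg_of_le (fun s => pow_nonneg (hfac s) m) (fun s => ?_)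
    refine pow_le_pow_left₀ (hfac s) ?_ m
    have h1 : 1 - b s ≤ 1 := by have := hnn s; linarith
    exact mul_le_of_le_one_right (hnn s) h1

/-- partial-sum bound for the block comparison -/
lemma aux_block_sum (hm : 1 ≤ m) (hb : ∀ k, b k ∈ Set.Icc (0 : ℝ) 1)
    (hmono : Antitone b) (N : ℕ) :
    ∑ s ∈ Finset.range (N * m), b s ^ m ≤ ∑ k ∈ Finset.range N, (m : ℝ) * b (k * m) ^ m := by
  induction N with
  | zero => simp
  | succ N ih =>
    rw [Finset.sum_range_succ, Nat.succ_mul]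
    have hsplit : ∑ s ∈ Finset.range (N * m + m), b s ^ m
        = ∑ s ∈ Finset.range (N * m), b s ^ m
          + ∑ s ∈ Finset.Ico (N * m) (N * m + m), b s ^ m := by
      rw [Finset.range_eq_Ico, Finset.range_eq_Ico]
      exact (Finset.sum_Ico_consecutive (fun s => b s ^ m) (Nat.zero_le (N * m))
        (Nat.le_add_right _ m)).symm
    rw [hsplit]
    refine add_le_add ih ?_
    have : ∀ s ∈ Finset.Ico (N * m) (N * m + m), b s ^ m ≤ b (N * m) ^ m := by
      intro s hs
      rw [Finset.mem_Ico] at hs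
      exact pow_le_pow_left₀ (hb s).1 (hmono hs.1) m
    calc ∑ s ∈ Finset.Ico (N * m) (N * m + m), b s ^ m
        ≤ ∑ _s ∈ Finset.Ico (N * m) (N * m + m), b (N * m) ^ m :=
          Finset.sum_le_sum this
      _ = (m : ℝ) * b (N * m) ^ m := by
          rw [Finset.sum_const, Nat.card_Ico]
          simp [mul_comm]

/-- (c) ↔ condensed -/
lemma aux_ca (hm : 1 ≤ m) (hb : ∀ k, b k ∈ Set.Icc (0 : ℝ) 1)
    (hmono : Antitone b) :
    Summable (fun s => b s ^ m) ↔ Summable (fun k => b (k * m) ^ m) := by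
  constructor
  · intro h
    exact h.comp_injective fun a c h' => Nat.eq_of_mul_eq_mul_right hm h'
  · intro h
    have hM := (h.mul_left (m : ℝ))
    refine summable_of_sum_range_le (c := ∑' k, (m : ℝ) * b (k * m) ^ m)
      (fun s => pow_nonneg (hb s).1 m) (fun N => ?_)
    calc ∑ s ∈ Finset.range N, b s ^ m
        ≤ ∑ s ∈ Finset.range (N * m), b s ^ m := by
          refine Finset.sum_le_sum_of_subset_of_nonneg ?_ (fun s _ _ => pow_nonneg (hb s).1 m)
          exact Finset.range_subset_range.2 (Nat.le_mul_of_pos_right N hm)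
      _ ≤ ∑ k ∈ Finset.range N, (m : ℝ) * b (k * m) ^ m := aux_block_sum hm hb hmono N
      _ ≤ ∑' k, (m : ℝ) * b (k * m) ^ m :=
          Summable.sum_le_tsum _ (fun k _ => mul_nonneg (Nat.cast_nonneg m)
            (pow_nonneg (hb (k * m)).1 m)) hM

/-- (a) ↔ condensed -/
lemma aux_ac (hm : 1 ≤ m) (hb : ∀ k, b k ∈ Set.Icc (0 : ℝ) 1) (hb0 : b 0 < 1)
    (hmono : Antitone b) :
    Summable (fun k => ∏ s ∈ Finset.Ico (k * m) ((k + 1) * m), b s * (1 - b s)) ↔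
      Summable (fun k => b (k * m) ^ m) := by
  have hc : (0:ℝ) < 1 - b 0 := by linarith
  have hnn : ∀ s, (0:ℝ) ≤ b s := fun s => (hb s).1
  have hfac : ∀ s, (0:ℝ) ≤ b s * (1 - b s) := fun s =>
    mul_nonneg (hnn s) (by have := (hb s).2; linarith)
  have hcard : ∀ k : ℕ, (Finset.Ico (k * m) ((k + 1) * m)).card = m := by
    intro k; rw [Nat.card_Ico, Nat.succ_mul, Nat.add_sub_cancel_left]
  have hupper : ∀ k, ∏ s ∈ Finset.Ico (k * m) ((k + 1) * m), b s * (1 - b s)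
      ≤ b (k * m) ^ m := by
    intro k
    calc ∏ s ∈ Finset.Ico (k * m) ((k + 1) * m), b s * (1 - b s)
        ≤ ∏ s ∈ Finset.Ico (k * m) ((k + 1) * m), b (k * m) := by
          refine Finset.prod_le_prod (fun s _ => hfac s) (fun s hs => ?_)
          rw [Finset.mem_Ico] at hs
          have h1 : b s * (1 - b s) ≤ b s :=
            mul_le_of_le_one_right (hnn s) (by have := hnn s; linarith [(hb s).2])
          exact h1.trans (hmono hs.1)
      _ = b (k * m) ^ m := by rw [Finset.prod_const, hcard]
  have hlower : ∀ k, (b ((k + 1) * m) * (1 - b 0)) ^ m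
      ≤ ∏ s ∈ Finset.Ico (k * m) ((k + 1) * m), b s * (1 - b s) := by
    intro k
    calc (b ((k + 1) * m) * (1 - b 0)) ^ m
        = ∏ s ∈ Finset.Ico (k * m) ((k + 1) * m), b ((k + 1) * m) * (1 - b 0) := by
          rw [Finset.prod_const, hcard]
      _ ≤ ∏ s ∈ Finset.Ico (k * m) ((k + 1) * m), b s * (1 - b s) := by
          refine Finset.prod_le_prod
            (fun s _ => mul_nonneg (hnn _) hc.le) (fun s hs => ?_)
          rw [Finset.mem_Ico] at hs
          refine mul_le_mul (hmono hs.2.le) ?_ hc.le (hnn s)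
          have := hmono (Nat.zero_le s); linarith
  constructor
  · intro h
    have h2 : Summable (fun k => (b ((k + 1) * m) * (1 - b 0)) ^ m) :=
      h.of_nonneg_of_le
        (fun k => pow_nonneg (mul_nonneg (hnn _) hc.le) m) hlower
    have h3 : Summable (fun k => b ((k + 1) * m) ^ m * (1 - b 0) ^ m) :=
      h2.congr fun k => by rw [mul_pow]
    have h4 : Summable (fun k => b ((k + 1) * m) ^ m) := by
      have := h3.mul_right ((1 - b 0) ^ m)⁻¹
      refine this.congr fun k => ?_
      field_simp
    exact (summable_nat_add_iff 1).1 h4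
  · intro h
    exact h.of_nonneg_of_le
      (fun k => Finset.prod_nonneg fun s _ => hfac s) hupper

end Aux

/-- Lemma 2(i): for a nonincreasing sequence `b_k ∈ [0,1]` with `b_0 < 1` and `n ≥ 2`,
the divergence of `∑_k ∏_{s=k(n-1)}^{(k+1)(n-1)-1} b_s (1-b_s)`, of
`∑_s (b_s (1-b_s))^{n-1}`, and of `∑_s b_s^{n-1}` are all equivalent. -/
theorem stmt_11 (n : ℕ) (hn : 2 ≤ n) (b : ℕ → ℝ) (hmono : Antitone b)
    (hb : ∀ k, b k ∈ Set.Icc (0 : ℝ) 1) (hb0 : b 0 < 1) :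
    (¬ Summable (fun k => ∏ s ∈ Finset.Ico (k * (n - 1)) ((k + 1) * (n - 1)),
          b s * (1 - b s)) ↔
        ¬ Summable fun s => (b s * (1 - b s)) ^ (n - 1)) ∧
    (¬ Summable (fun s => (b s * (1 - b s)) ^ (n - 1)) ↔
        ¬ Summable fun s => b s ^ (n - 1)) := by
  have hm : 1 ≤ n - 1 := by omega
  have h1 := aux_ac hm hb hb0 hmono
  have h2 := aux_ca hm hb hmono
  have h3 := aux_bc hm hb hb0 hmono
  constructor
  · rw [h1, ← h2, ← h3]
  · rw [h3]
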